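/- In the quantized enveloping algebra U_h(sl_2), for all m, n ≥ 0, one has e^m f^n = ∑_{p=0}^{min(m,n)} q^{p(p+1)/2 - nm} · {p}_q! · [m choose p]_q · [n choose p]_q · f^{n-p} {H - m - n + 2p}_{q,p} e^{m-p}, where e = v^{-1}(q-1)E, f = (q-1)FK, {H+j}_q = q^j K^2 - 1, and {H+i}_{q,p} = {H+i}_q {H+i-1}_q ⋯ {H+i-p+1}_q. -/

import Mathlib

open PowerSeries Finset
open scoped TensorProduct

noncomputable section

/-- The base ring `ℚ[[h]]`. -/
abbrev R : Type := PowerSeries ℚ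

/-- `v = exp(h/2) ∈ ℚ[[h]]`. -/
def vexp : R := PowerSeries.rescale (2⁻¹ : ℚ) (PowerSeries.exp ℚ)

/-- `{i}_q = q^i - 1`. -/
def qI (Q : Rˣ) (i : ℤ) : R := ((Q ^ i : Rˣ) : R) - 1

/-- `{i}_{q,n}`. -/
def qPoch (Q : Rˣ) (i : ℤ) (n : ℕ) : R := ∏ k ∈ range n, qI Q (i - k)

/-- `{n}_q!`. -/
def qFact (Q : Rˣ) (n : ℕ) : R := qPoch Q n n

variable {A : Type} [Ring A] [Algebra R A]

/-- `e = v⁻¹(q-1)E`. -/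
def ee (V : Rˣ) (E : A) : A := (((V⁻¹ : Rˣ) : R) * (((V ^ 2 : Rˣ) : R) - 1)) • E

/-- `f = (q-1)FK`. -/
def ff (V : Rˣ) (K : Aˣ) (F : A) : A := (((V ^ 2 : Rˣ) : R) - 1) • (F * (K : A))

/-- `{H+i}_{q,p} = ∏_{k<p} (q^{i-k}K² - 1)`. -/
def HPoch (Q : Rˣ) (K : Aˣ) (i : ℤ) (p : ℕ) : A :=
  ((List.range p).map (fun k => ((Q ^ (i - k) : Rˣ) : R) • ((K : A) * (K : A)) - 1)).prod

/-- The scalars `q^z`, `z ∈ ℤ`, inside `A` (so that `ℤ[q,q⁻¹]`-subalgebras can be described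
as subrings containing them). -/
def scalarsQ (Q : Rˣ) : Set A := {x | ∃ z : ℤ, x = algebraMap R A ((Q ^ z : Rˣ) : R)}

/-- The `ℤ[q,q⁻¹]`-subalgebra `U̅_q^{ev}` generated by `K²,K⁻²,e,f`. -/
def UbarEv (V : Rˣ) (K : Aˣ) (E F : A) : Subring A :=
  Subring.closure
    (({(K : A) * (K : A), ((K⁻¹ : Aˣ) : A) * ((K⁻¹ : Aˣ) : A), ee V E, ff V K F} : Set A)
      ∪ scalarsQ (V ^ 2))

/-- The `ℤ[q,q⁻¹]`-subalgebra `U_{ℤ,q}` generated by `K^{±1}` and the divided powers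
`Ẽ^{(n)}, F̃^{(n)}` (given as functions `Et, Ft`). -/
def UZq (V : Rˣ) (K : Aˣ) (Et Ft : ℕ → A) : Subring A :=
  Subring.closure
    ((({(K : A), ((K⁻¹ : Aˣ) : A)} : Set A) ∪ Set.range Et ∪ Set.range Ft)
      ∪ scalarsQ (V ^ 2))

/-- The left adjoint action `a ▷ b = ∑ a' b S(a'')`. -/
def adAct (Δ : A →ₐ[R] A ⊗[R] A) (S : A →ₗ[R] A) (a b : A) : A :=
  TensorProduct.lift ((LinearMap.mul R A).compl₂ ((LinearMap.mulLeft R b) ∘ₗ S)) (Δ a)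

/-- The two-sided ideal of the subring `Sg` generated by a subset `X ⊆ Sg`. -/
def idealIn (Sg : Subring A) (X : Set A) : AddSubgroup A :=
  AddSubgroup.closure {z | ∃ u ∈ Sg, ∃ x ∈ X, ∃ w ∈ Sg, z = u * x * w}



/-! ### Auxiliary development -/

lemma fms {α β : Type*} (g : α → β) : ∀ l : List α, (l.flatMap fun a => [g a]) = l.map g
  | [] => rfl
  | a :: l => by simp only [List.flatMap_cons, List.map_cons, fms g l]; rfl

lemma vexp_const : (PowerSeries.constantCoeff (R := ℚ)) vexp = 1 := by
  rw [vexp, ← PowerSeries.coeff_zero_eq_constantCoeff]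
  simp [PowerSeries.coeff_rescale, PowerSeries.coeff_exp]

lemma vexp_coeff1 : (PowerSeries.coeff (R := ℚ) 1) vexp = 2⁻¹ := by
  simp [vexp, PowerSeries.coeff_rescale, PowerSeries.coeff_exp]

lemma vexp_pow (m : ℕ) : (PowerSeries.constantCoeff (R := ℚ)) (vexp ^ m) = 1 ∧
    (PowerSeries.coeff (R := ℚ) 1) (vexp ^ m) = m * 2⁻¹ := by
  induction m with
  | zero => simp
  | succ m ih =>
    constructor
    · rw [pow_succ, map_mul, ih.1, vexp_const, one_mul]
    · rw [pow_succ, PowerSeries.coeff_one_mul, ih.1, ih.2, vexp_coeff1, vexp_const]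
      push_cast; ring

lemma vexp_pow_ne_one {m : ℕ} (hm : m ≠ 0) : vexp ^ m ≠ 1 := by
  intro h
  have h2 := (vexp_pow m).2
  rw [h] at h2
  simp at h2
  exact hm h2

lemma qpow_ne_one (V : Rˣ) (hV : (V : R) = vexp) (z : ℤ) (hz : z ≠ 0) :
    ((((V ^ 2 : Rˣ) ^ z : Rˣ)) : R) ≠ 1 := by
  intro h
  have hu : (V ^ 2 : Rˣ) ^ z = 1 := Units.ext (by rw [h]; rfl)
  have hu2 : (V ^ 2 : Rˣ) ^ z.natAbs = 1 := by
    rcases Int.natAbs_eq z with he | he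
    · rw [he] at hu; exact_mod_cast hu
    · rw [he] at hu; rw [zpow_neg] at hu
      have := congrArg (·⁻¹) hu
      simpa using this
  have hfin : (vexp) ^ (2 * z.natAbs) = 1 := by
    have h2 := congrArg (Units.val) hu2
    push_cast at h2
    rw [pow_mul, ← hV]
    exact h2
  exact vexp_pow_ne_one (by simpa using hz) hfin

lemma qI_ne_zero (V : Rˣ) (hV : (V : R) = vexp) {i : ℤ} (hi : i ≠ 0) : qI (V^2) i ≠ 0 := by
  rw [qI, sub_ne_zero]
  exact qpow_ne_one V hV i hi

lemma qFact_ne_zero (V : Rˣ) (hV : (V : R) = vexp) (n : ℕ) : qFact (V^2) n ≠ 0 := by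
  rw [qFact, qPoch]
  apply Finset.prod_ne_zero_iff.2
  intro j hj
  apply qI_ne_zero V hV
  simp only [mem_range] at hj
  omega

/-! qv layer -/

def qv (Q : Rˣ) (a : ℤ) : R := ((Q ^ a : Rˣ) : R)

lemma qv_mul' (Q : Rˣ) (a b : ℤ) : qv Q a * qv Q b = qv Q (a + b) := by
  rw [qv, qv, qv, zpow_add]; rfl

lemma qv_zero (Q : Rˣ) : qv Q 0 = 1 := by rw [qv]; norm_num

lemma qI_qv (Q : Rˣ) (i : ℤ) : qI Q i = qv Q i - 1 := rfl

lemma qI_zero (Q : Rˣ) : qI Q 0 = 0 := by rw [qI_qv, qv_zero, sub_self]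

lemma qI_add (Q : Rˣ) (a b : ℤ) : qI Q (a + b) = qv Q a * qI Q b + qI Q a := by
  simp only [qI_qv]
  have := qv_mul' Q a b
  linear_combination -this

lemma qPoch_zero (Q : Rˣ) (i : ℤ) : qPoch Q i 0 = 1 := by simp [qPoch]

lemma qPoch_succ_last (Q : Rˣ) (i : ℤ) (p : ℕ) :
    qPoch Q i (p + 1) = qPoch Q i p * qI Q (i - p) := by
  rw [qPoch, Finset.prod_range_succ]; rfl

lemma qPoch_succ_first (Q : Rˣ) (i : ℤ) (p : ℕ) :
    qPoch Q i (p + 1) = qI Q i * qPoch Q (i - 1) p := by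
  rw [qPoch, Finset.prod_range_succ']
  have h : ∀ j ∈ range p, qI Q (i - ((j : ℕ) + 1 : ℕ)) = qI Q (i - 1 - j) := by
    intro j _; congr 1; push_cast; ring
  rw [Finset.prod_congr rfl h, Nat.cast_zero, sub_zero, mul_comm]
  rfl

lemma qFact_zero (Q : Rˣ) : qFact Q 0 = 1 := by simp [qFact, qPoch]

lemma qFact_succ (Q : Rˣ) (p : ℕ) :
    qFact Q (p + 1) = qI Q ((p : ℤ) + 1) * qFact Q p := by
  rw [qFact, show ((p + 1 : ℕ) : ℤ) = (p : ℤ) + 1 by push_cast; ring, qPoch_succ_first,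
    show (p : ℤ) + 1 - 1 = (p : ℤ) by ring]
  rfl

lemma qPoch_L1 (Q : Rˣ) (i : ℤ) (s : ℕ) :
    qPoch Q (i + 1) (s + 1) =
      qv Q ((s : ℤ) + 1) * qPoch Q i (s + 1) + qI Q ((s : ℤ) + 1) * qPoch Q i s := by
  rw [qPoch_succ_first, qPoch_succ_last, show i + 1 - 1 = i by ring]
  have h1 := qI_add Q ((s : ℤ) + 1) (i - s)
  rw [show ((s : ℤ) + 1 + (i - s)) = i + 1 by ring] at h1
  rw [h1]; ring

lemma qPoch_L2 (Q : Rˣ) (i : ℤ) (s : ℕ) :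
    qPoch Q (i + 1) (s + 1) =
      qPoch Q i (s + 1) + qv Q (i - s) * (qI Q ((s : ℤ) + 1) * qPoch Q i s) := by
  rw [qPoch_succ_first, qPoch_succ_last, show i + 1 - 1 = i by ring]
  have h1 := qI_add Q (i - s) ((s : ℤ) + 1)
  rw [show (i - s + ((s : ℤ) + 1)) = i + 1 by ring] at h1
  rw [h1]; ring

section qbin
variable (Q : Rˣ) (hfact : ∀ n : ℕ, qFact Q n ≠ 0)
  (qbin : ℤ → ℕ → R) (hqbin : ∀ (i : ℤ) (n : ℕ), qFact Q n * qbin i n = qPoch Q i n)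

include hfact hqbin

omit hfact in
lemma qbin_zero (i : ℤ) : qbin i 0 = 1 := by
  have := hqbin i 0
  rwa [qFact_zero, one_mul, qPoch_zero] at this

lemma qbin_eq_zero {n p : ℕ} (h : n < p) : qbin (n : ℤ) p = 0 := by
  apply mul_left_cancel₀ (hfact p)
  rw [hqbin, mul_zero, qPoch]
  apply Finset.prod_eq_zero (Finset.mem_range.2 h)
  rw [sub_self, qI_zero]

lemma qbin_B1 (i : ℤ) (s : ℕ) :
    qbin (i + 1) (s + 1) = qv Q ((s : ℤ) + 1) * qbin i (s + 1) + qbin i s := by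
  apply mul_left_cancel₀ (hfact (s + 1))
  linear_combination (hqbin (i+1) (s+1)) + (qPoch_L1 Q i s)
    - qv Q ((s : ℤ) + 1) * (hqbin i (s+1)) - qI Q ((s : ℤ) + 1) * (hqbin i s)
    - (qbin i s) * (qFact_succ Q s)

lemma qbin_B2 (i : ℤ) (s : ℕ) :
    qbin (i + 1) (s + 1) = qbin i (s + 1) + qv Q (i - s) * qbin i s := by
  apply mul_left_cancel₀ (hfact (s + 1))
  linear_combination (hqbin (i+1) (s+1)) + (qPoch_L2 Q i s)
    - (hqbin i (s+1)) - qv Q (i - s) * qI Q ((s : ℤ) + 1) * (hqbin i s)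
    - qv Q (i - s) * (qbin i s) * (qFact_succ Q s)

lemma qbin_B3 (i : ℤ) (s : ℕ) :
    qI Q ((s : ℤ) + 1) * qbin i (s + 1) = qI Q (i - s) * qbin i s := by
  apply mul_left_cancel₀ (hfact (s + 1))
  have h := qPoch_succ_last Q i s
  linear_combination qI Q ((s : ℤ) + 1) * (hqbin i (s+1)) + qI Q ((s : ℤ) + 1) * h
    - qI Q (i - s) * qI Q ((s : ℤ) + 1) * (hqbin i s)
    - qI Q (i - s) * (qbin i s) * (qFact_succ Q s)

end qbin

/-! noncommutative layer -/

section alg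
variable (Q : Rˣ) (k e f : A)

def DD (j : ℤ) : A := qv Q j • k - 1

def PP (i : ℤ) (p : ℕ) : A := ((List.range p).map (fun t : ℕ => DD Q k (i - (t : ℤ)))).prod

lemma PP_zero (i : ℤ) : PP Q k i 0 = 1 := rfl

lemma PP_succ_last (i : ℤ) (p : ℕ) :
    PP Q k i (p + 1) = PP Q k i p * DD Q k (i - p) := by
  rw [PP, PP, List.range_succ, List.map_append, List.prod_append]
  simp

lemma PP_succ_first (i : ℤ) (p : ℕ) :
    PP Q k i (p + 1) = DD Q k i * PP Q k (i - 1) p := by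
  rw [PP, PP, List.range_succ_eq_map, List.map_cons, List.prod_cons]
  simp only [List.map_map]
  congr 2
  · norm_num
  · apply List.map_congr_left
    intro t _
    simp only [Function.comp_apply]
    congr 1
    push_cast; ring

lemma HPoch_eq (K : Aˣ) (i : ℤ) (p : ℕ) :
    HPoch Q K i p = PP Q ((K : A) * (K : A)) i p := by
  rw [HPoch, PP]
  congr 1
  show List.map _ ((List.range p).flatMap fun a => [((a : ℕ) : ℤ)]) = _
  rw [fms (fun t : ℕ => (t : ℤ)) (List.range p), List.map_map]
  rfl

lemma DD_comm (a b : ℤ) : DD Q k a * DD Q k b = DD Q k b * DD Q k a := by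
  simp only [DD, sub_mul, mul_sub, smul_mul_assoc, mul_smul_comm, smul_smul, one_mul, mul_one,
    smul_sub]
  rw [mul_comm (qv Q a) (qv Q b)]
  abel

lemma PP_DD_comm (i : ℤ) (p : ℕ) (j : ℤ) :
    PP Q k i p * DD Q k j = DD Q k j * PP Q k i p := by
  induction p with
  | zero => simp [PP_zero]
  | succ p ih =>
    rw [PP_succ_last, mul_assoc, DD_comm, ← mul_assoc, ih, mul_assoc]

lemma DD_lin {c1 c2 c3 : R} {j1 j2 j3 : ℤ}
    (h1 : c1 = c2 + c3) (h2 : c1 * qv Q j1 = c2 * qv Q j2 + c3 * qv Q j3) :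
    c1 • DD Q k j1 = c2 • DD Q k j2 + c3 • DD Q k j3 := by
  simp only [DD, smul_sub, smul_smul]
  rw [h2, h1, add_smul, add_smul]
  abel

variable (hke : k * e = qv Q 2 • (e * k)) (hkf : k * f = qv Q (-2) • (f * k))
  (hef : e * f = qv Q (-1) • (f * e) + qI Q 1 • DD Q k 0)

include hke in
lemma eDD (j : ℤ) : e * DD Q k j = DD Q k (j - 2) * e := by
  simp only [DD, mul_sub, sub_mul, mul_smul_comm, smul_mul_assoc, mul_one, one_mul]
  rw [hke, smul_smul, qv_mul' Q (j-2) 2, show j - 2 + 2 = j by ring]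

include hkf in
lemma DDf (j : ℤ) : DD Q k j * f = f * DD Q k (j - 2) := by
  simp only [DD, mul_sub, sub_mul, mul_smul_comm, smul_mul_assoc, mul_one, one_mul]
  rw [hkf, smul_smul, qv_mul' Q j (-2), show j + -2 = j - 2 by ring]

include hke in
lemma ePP (i : ℤ) (p : ℕ) : e * PP Q k i p = PP Q k (i - 2) p * e := by
  induction p with
  | zero => simp [PP_zero]
  | succ p ih =>
    rw [PP_succ_last, ← mul_assoc, ih, mul_assoc, eDD Q k e hke,
      ← mul_assoc, show i - (p : ℤ) - 2 = i - 2 - (p : ℤ) by ring, ← PP_succ_last]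

include hkf in
lemma PPf (i : ℤ) (p : ℕ) : PP Q k i p * f = f * PP Q k (i - 2) p := by
  induction p with
  | zero => simp [PP_zero]
  | succ p ih =>
    rw [PP_succ_last, mul_assoc, DDf Q k f hkf, ← mul_assoc, ih, mul_assoc,
      show i - (p : ℤ) - 2 = i - 2 - (p : ℤ) by ring, ← PP_succ_last]

include hke hef in
lemma EF1 (t : ℕ) : e ^ (t + 1) * f =
    qv Q (-((t : ℤ) + 1)) • (f * e ^ (t + 1)) +
      (qv Q (-(t : ℤ)) * qI Q ((t : ℤ) + 1)) • (DD Q k (-(t : ℤ)) * e ^ t) := by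
  induction t with
  | zero =>
    simpa [qv_zero] using hef
  | succ t ih =>
    have h1 : e ^ (t + 1 + 1) * f = e * (e ^ (t + 1) * f) := by
      rw [← mul_assoc, ← pow_succ']
    rw [h1, ih]
    rw [mul_add, mul_smul_comm, mul_smul_comm]
    rw [← mul_assoc e f, hef]
    rw [add_mul, smul_mul_assoc, smul_mul_assoc, mul_assoc f e, ← pow_succ']
    rw [← mul_assoc e (DD Q k (-(t:ℤ))), eDD Q k e hke, mul_assoc, ← pow_succ']
    rw [smul_add, smul_smul, smul_smul, qv_mul']
    rw [show (-((t:ℤ)+1) + -1 : ℤ) = -((t+1:ℕ) + 1 : ℤ) by push_cast; ring]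
    have key0 : (qv Q (-((t:ℤ)+1)) * qI Q 1) • DD Q k 0 +
        (qv Q (-(t:ℤ)) * qI Q ((t:ℤ)+1)) • DD Q k (-(t:ℤ) - 2) =
        (qv Q (-((t+1:ℕ) : ℤ)) * qI Q (((t+1:ℕ) : ℤ)+1)) • DD Q k (-((t+1:ℕ) : ℤ)) := by
      apply (DD_lin Q k _ _).symm
      · simp only [qI_qv, sub_mul, mul_sub, add_mul, mul_add, mul_one, one_mul, mul_assoc,
          qv_mul', qv_zero]
        push_cast
        ring_nf
      · simp only [qI_qv, sub_mul, mul_sub, add_mul, mul_add, mul_one, one_mul, mul_assoc,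
          qv_mul', qv_zero]
        push_cast
        ring_nf
    have key : (qv Q (-((t:ℤ)+1)) * qI Q 1) • (DD Q k 0 * e ^ (t+1)) +
        (qv Q (-(t:ℤ)) * qI Q ((t:ℤ)+1)) • (DD Q k (-(t:ℤ) - 2) * e ^ (t+1)) =
        (qv Q (-((t+1:ℕ) : ℤ)) * qI Q (((t+1:ℕ) : ℤ)+1)) • (DD Q k (-((t+1:ℕ) : ℤ)) * e ^ (t+1)) := by
      have h2 := congrArg (fun z => z * e ^ (t+1)) key0
      simpa [add_mul, smul_mul_assoc] using h2
    rw [add_assoc]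
    congr 1

include hke hef in
lemma EF0 (t : ℕ) : e ^ t * f =
    qv Q (-(t : ℤ)) • (f * e ^ t) +
      (qv Q (1 - (t : ℤ)) * qI Q (t : ℤ)) • (DD Q k (1 - (t : ℤ)) * e ^ (t - 1)) := by
  cases t with
  | zero => simp [qv_zero, qI_zero]
  | succ s =>
    have h := EF1 Q k e f hke hef s
    rw [show (-((s+1:ℕ) : ℤ)) = -((s:ℤ)+1) by push_cast; ring,
      show (1 - ((s+1:ℕ) : ℤ)) = -(s:ℤ) by push_cast; ring,
      show (((s+1:ℕ)) : ℤ) = (s:ℤ)+1 by push_cast; ring,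
      show s + 1 - 1 = s from rfl]
    exact h

end alg

/-! coefficient layer -/

def ccoef (Q : Rˣ) (qbin : ℤ → ℕ → R) (m n p : ℕ) : R :=
  qv Q (((p * (p + 1) / 2 : ℕ) : ℤ) - (n * m : ℤ)) * qFact Q p * qbin m p * qbin n p

lemma Tz_succ (p : ℕ) : (((p + 1) * (p + 1 + 1) / 2 : ℕ) : ℤ) =
    ((p * (p + 1) / 2 : ℕ) : ℤ) + (p : ℤ) + 1 := by
  have h : (p + 1) * (p + 1 + 1) = p * (p + 1) + (p + 1) * 2 := by ring
  rw [h, Nat.add_mul_div_right _ _ (by norm_num : (0:ℕ) < 2)]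
  push_cast; ring

section coef
variable (Q : Rˣ) (hfact : ∀ n : ℕ, qFact Q n ≠ 0)
  (qbin : ℤ → ℕ → R) (hqbin : ∀ (i : ℤ) (n : ℕ), qFact Q n * qbin i n = qPoch Q i n)

include hfact hqbin

lemma cc_eq_zero {m n p : ℕ} (h : m < p ∨ n < p) : ccoef Q qbin m n p = 0 := by
  rw [ccoef]
  rcases h with h | h
  · rw [qbin_eq_zero Q hfact qbin hqbin h]; ring
  · rw [qbin_eq_zero Q hfact qbin hqbin h]; ring

lemma cc_key1 (m n p : ℕ) :
    ccoef Q qbin m (n+1) (p+1) =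
      qv Q ((p:ℤ)+1-(m:ℤ)) * ccoef Q qbin m n (p+1) +
      qv Q ((p:ℤ)+1-(m:ℤ)) * qI Q ((m:ℤ)-(p:ℤ)) * ccoef Q qbin m n p := by
  have hB1 := qbin_B1 Q hfact qbin hqbin (n : ℤ) p
  have hB3 := qbin_B3 Q hfact qbin hqbin (m : ℤ) p
  have hFS := qFact_succ Q p
  have hM1 : qv Q ((((p+1) * (p+1+1) / 2 : ℕ) : ℤ) - ((n:ℤ)+1) * (m:ℤ)) * qv Q ((p:ℤ)+1) =
      qv Q ((p:ℤ)+1-(m:ℤ)) * qv Q ((((p+1) * (p+1+1) / 2 : ℕ) : ℤ) - (n:ℤ) * (m:ℤ)) := by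
    rw [qv_mul', qv_mul']; congr 1; ring
  have hM2 : qv Q ((((p+1) * (p+1+1) / 2 : ℕ) : ℤ) - ((n:ℤ)+1) * (m:ℤ)) =
      qv Q ((p:ℤ)+1-(m:ℤ)) * qv Q (((p * (p+1) / 2 : ℕ) : ℤ) - (n:ℤ) * (m:ℤ)) := by
    rw [qv_mul']; congr 1; rw [Tz_succ]; ring
  simp only [ccoef, Nat.cast_add, Nat.cast_one]
  linear_combination
    (qv Q ((((p+1) * (p+1+1) / 2 : ℕ) : ℤ) - ((n:ℤ)+1) * (m:ℤ)) * qFact Q (p+1) * qbin (m:ℤ) (p+1)) * hB1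
    + (qFact Q (p+1) * qbin (m:ℤ) (p+1) * qbin (n:ℤ) (p+1)) * hM1
    + (qv Q ((((p+1) * (p+1+1) / 2 : ℕ) : ℤ) - ((n:ℤ)+1) * (m:ℤ)) * qbin (m:ℤ) (p+1) * qbin (n:ℤ) p) * hFS
    + (qv Q ((((p+1) * (p+1+1) / 2 : ℕ) : ℤ) - ((n:ℤ)+1) * (m:ℤ)) * qFact Q p * qbin (n:ℤ) p) * hB3
    + (qI Q ((m:ℤ)-(p:ℤ)) * qFact Q p * qbin (m:ℤ) p * qbin (n:ℤ) p) * hM2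

lemma cc_key2 (m n p : ℕ) :
    ccoef Q qbin m (n+1) (p+1) * qv Q (-(m:ℤ)-(n:ℤ)+2*(p:ℤ)+1) =
      (qv Q ((p:ℤ)+1-(m:ℤ)) * ccoef Q qbin m n (p+1)) * qv Q (-(m:ℤ)-(n:ℤ)+2*(p:ℤ)-(p:ℤ)) +
      (qv Q ((p:ℤ)+1-(m:ℤ)) * qI Q ((m:ℤ)-(p:ℤ)) * ccoef Q qbin m n p) * qv Q ((p:ℤ)+1-(m:ℤ)) := by
  have hB2 := qbin_B2 Q hfact qbin hqbin (n : ℤ) p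
  have hB3 := qbin_B3 Q hfact qbin hqbin (m : ℤ) p
  have hFS := qFact_succ Q p
  have hN1 : qv Q ((((p+1) * (p+1+1) / 2 : ℕ) : ℤ) - ((n:ℤ)+1) * (m:ℤ)) * qv Q (-(m:ℤ)-(n:ℤ)+2*(p:ℤ)+1) =
      qv Q ((p:ℤ)+1-(m:ℤ)) * qv Q ((((p+1) * (p+1+1) / 2 : ℕ) : ℤ) - (n:ℤ) * (m:ℤ)) *
        qv Q (-(m:ℤ)-(n:ℤ)+2*(p:ℤ)-(p:ℤ)) := by
    rw [qv_mul', qv_mul', qv_mul']; congr 1; ring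
  have hN2 : qv Q ((((p+1) * (p+1+1) / 2 : ℕ) : ℤ) - ((n:ℤ)+1) * (m:ℤ)) * qv Q (-(m:ℤ)-(n:ℤ)+2*(p:ℤ)+1) * qv Q ((n:ℤ)-(p:ℤ)) =
      qv Q ((p:ℤ)+1-(m:ℤ)) * qv Q ((p:ℤ)+1-(m:ℤ)) * qv Q (((p * (p+1) / 2 : ℕ) : ℤ) - (n:ℤ) * (m:ℤ)) := by
    rw [qv_mul', qv_mul', qv_mul', qv_mul']; congr 1; rw [Tz_succ]; ring
  simp only [ccoef, Nat.cast_add, Nat.cast_one]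
  linear_combination
    (qv Q ((((p+1) * (p+1+1) / 2 : ℕ) : ℤ) - ((n:ℤ)+1) * (m:ℤ)) * qv Q (-(m:ℤ)-(n:ℤ)+2*(p:ℤ)+1)
        * qFact Q (p+1) * qbin (m:ℤ) (p+1)) * hB2
    + (qFact Q (p+1) * qbin (m:ℤ) (p+1) * qbin (n:ℤ) (p+1)) * hN1
    + (qv Q ((((p+1) * (p+1+1) / 2 : ℕ) : ℤ) - ((n:ℤ)+1) * (m:ℤ)) * qv Q (-(m:ℤ)-(n:ℤ)+2*(p:ℤ)+1)
        * qv Q ((n:ℤ)-(p:ℤ)) * qbin (m:ℤ) (p+1) * qbin (n:ℤ) p) * hFS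
    + (qv Q ((((p+1) * (p+1+1) / 2 : ℕ) : ℤ) - ((n:ℤ)+1) * (m:ℤ)) * qv Q (-(m:ℤ)-(n:ℤ)+2*(p:ℤ)+1)
        * qv Q ((n:ℤ)-(p:ℤ)) * qFact Q p * qbin (n:ℤ) p) * hB3
    + (qI Q ((m:ℤ)-(p:ℤ)) * qFact Q p * qbin (m:ℤ) p * qbin (n:ℤ) p) * hN2

end coef

/-! ### Main commutation development -/

section mainsec
variable (Q : Rˣ) (hfact : ∀ n : ℕ, qFact Q n ≠ 0)
  (qbin : ℤ → ℕ → R) (hqbin : ∀ (i : ℤ) (n : ℕ), qFact Q n * qbin i n = qPoch Q i n)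
  (k e f : A)
  (hke : k * e = qv Q 2 • (e * k)) (hkf : k * f = qv Q (-2) • (f * k))
  (hef : e * f = qv Q (-1) • (f * e) + qI Q 1 • DD Q k 0)

include hfact hqbin hke hkf hef in
lemma STEP1 (m n p : ℕ) (hpn : p ≤ n) :
    ccoef Q qbin m n p •
        ((f ^ (n - p) * PP Q k (-(m:ℤ)-(n:ℤ)+2*(p:ℤ)) p * e ^ (m - p)) * f) =
      (qv Q ((p:ℤ)-(m:ℤ)) * ccoef Q qbin m n p) •
        (f ^ (n + 1 - p) * PP Q k (-(m:ℤ)-(n:ℤ)+2*(p:ℤ)-2) p * e ^ (m - p)) +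
      (qv Q ((p:ℤ)+1-(m:ℤ)) * qI Q ((m:ℤ)-(p:ℤ)) * ccoef Q qbin m n p) •
        (f ^ (n - p) * PP Q k (-(m:ℤ)-(n:ℤ)+2*(p:ℤ)) p *
          (DD Q k ((p:ℤ)+1-(m:ℤ)) * e ^ (m - (p+1)))) := by
  rcases le_or_gt p m with hpm | hpm
  · have hEF := EF0 Q k e f hke hef (m - p)
    rw [Nat.cast_sub hpm] at hEF
    rw [show (-((m:ℤ)-(p:ℤ))) = (p:ℤ)-(m:ℤ) by ring,
      show (1 - ((m:ℤ)-(p:ℤ))) = (p:ℤ)+1-(m:ℤ) by ring, Nat.sub_sub] at hEF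
    rw [mul_assoc (f ^ (n - p) * PP Q k (-(m:ℤ)-(n:ℤ)+2*(p:ℤ)) p) (e ^ (m-p)) f, hEF,
      mul_add, smul_add]
    congr 1
    · rw [mul_smul_comm, smul_smul, mul_comm (ccoef Q qbin m n p)]
      congr 1
      rw [← mul_assoc (f ^ (n - p) * PP Q k (-(m:ℤ)-(n:ℤ)+2*(p:ℤ)) p) f (e ^ (m-p)),
        mul_assoc (f ^ (n - p)) (PP Q k (-(m:ℤ)-(n:ℤ)+2*(p:ℤ)) p) f,
        PPf Q k f hkf,
        ← mul_assoc (f ^ (n - p)) f (PP Q k (-(m:ℤ)-(n:ℤ)+2*(p:ℤ)-2) p),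
        ← pow_succ, show n - p + 1 = n + 1 - p by omega]
    · rw [mul_smul_comm, smul_smul, mul_comm (ccoef Q qbin m n p)]
  · have hz : ccoef Q qbin m n p = 0 := cc_eq_zero Q hfact qbin hqbin (Or.inl hpm)
    rw [hz]
    simp

include hfact hqbin in
lemma STEP2 (m n p : ℕ) :
    ccoef Q qbin m (n+1) (p+1) •
        (f ^ (n+1-(p+1)) * PP Q k (-(m:ℤ)-((n+1:ℕ):ℤ)+2*((p+1:ℕ):ℤ)) (p+1) * e ^ (m-(p+1))) =
      (qv Q (((p+1:ℕ):ℤ)-(m:ℤ)) * ccoef Q qbin m n (p+1)) •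
        (f ^ (n+1-(p+1)) * PP Q k (-(m:ℤ)-(n:ℤ)+2*((p+1:ℕ):ℤ)-2) (p+1) * e ^ (m-(p+1))) +
      (qv Q ((p:ℤ)+1-(m:ℤ)) * qI Q ((m:ℤ)-(p:ℤ)) * ccoef Q qbin m n p) •
        (f ^ (n-p) * PP Q k (-(m:ℤ)-(n:ℤ)+2*(p:ℤ)) p *
          (DD Q k ((p:ℤ)+1-(m:ℤ)) * e ^ (m-(p+1)))) := by
  simp only [Nat.succ_sub_succ]
  rw [show -(m:ℤ)-((n+1:ℕ):ℤ)+2*((p+1:ℕ):ℤ) = (-(m:ℤ)-(n:ℤ)+2*(p:ℤ)+1) by push_cast; ring,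
    show -(m:ℤ)-(n:ℤ)+2*((p+1:ℕ):ℤ)-2 = (-(m:ℤ)-(n:ℤ)+2*(p:ℤ)) by push_cast; ring,
    show ((p+1:ℕ):ℤ)-(m:ℤ) = (p:ℤ)+1-(m:ℤ) by push_cast; ring]
  rw [PP_succ_first Q k (-(m:ℤ)-(n:ℤ)+2*(p:ℤ)+1) p,
    show (-(m:ℤ)-(n:ℤ)+2*(p:ℤ)+1)-1 = -(m:ℤ)-(n:ℤ)+2*(p:ℤ) by ring,
    ← PP_DD_comm]
  rw [PP_succ_last Q k (-(m:ℤ)-(n:ℤ)+2*(p:ℤ)) p]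
  have hD := DD_lin Q k (cc_key1 Q hfact qbin hqbin m n p) (cc_key2 Q hfact qbin hqbin m n p)
  rw [← mul_assoc (f ^ (n-p)) (PP Q k (-(m:ℤ)-(n:ℤ)+2*(p:ℤ)) p)
      (DD Q k (-(m:ℤ)-(n:ℤ)+2*(p:ℤ)+1)),
    mul_assoc (f ^ (n-p) * PP Q k (-(m:ℤ)-(n:ℤ)+2*(p:ℤ)) p)
      (DD Q k (-(m:ℤ)-(n:ℤ)+2*(p:ℤ)+1)) (e ^ (m-(p+1)))]
  rw [← mul_assoc (f ^ (n-p)) (PP Q k (-(m:ℤ)-(n:ℤ)+2*(p:ℤ)) p)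
      (DD Q k (-(m:ℤ)-(n:ℤ)+2*(p:ℤ)-(p:ℤ))),
    mul_assoc (f ^ (n-p) * PP Q k (-(m:ℤ)-(n:ℤ)+2*(p:ℤ)) p)
      (DD Q k (-(m:ℤ)-(n:ℤ)+2*(p:ℤ)-(p:ℤ))) (e ^ (m-(p+1)))]
  have h2 := congrArg
    (fun z => (f ^ (n-p) * PP Q k (-(m:ℤ)-(n:ℤ)+2*(p:ℤ)) p) * (z * e ^ (m-(p+1)))) hD
  simpa only [smul_mul_assoc, mul_smul_comm, add_mul, mul_add] using h2

include hfact hqbin hke hkf hef in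
lemma mainEq (m n : ℕ) :
    e ^ m * f ^ n = ∑ p ∈ range (n+1), ccoef Q qbin m n p •
      (f ^ (n-p) * PP Q k (-(m:ℤ)-(n:ℤ)+2*(p:ℤ)) p * e ^ (m-p)) := by
  induction n with
  | zero =>
    rw [Finset.sum_range_one]
    simp [ccoef, qbin_zero Q qbin hqbin, qFact_zero, PP_zero, qv_zero]
  | succ n ih =>
    rw [pow_succ, ← mul_assoc, ih, Finset.sum_mul]
    have h1 : ∀ p ∈ range (n+1),
        (ccoef Q qbin m n p •
          (f ^ (n-p) * PP Q k (-(m:ℤ)-(n:ℤ)+2*(p:ℤ)) p * e ^ (m-p))) * f =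
        ((qv Q ((p:ℤ)-(m:ℤ)) * ccoef Q qbin m n p) •
          (f ^ (n + 1 - p) * PP Q k (-(m:ℤ)-(n:ℤ)+2*(p:ℤ)-2) p * e ^ (m - p)) +
        (qv Q ((p:ℤ)+1-(m:ℤ)) * qI Q ((m:ℤ)-(p:ℤ)) * ccoef Q qbin m n p) •
          (f ^ (n - p) * PP Q k (-(m:ℤ)-(n:ℤ)+2*(p:ℤ)) p *
            (DD Q k ((p:ℤ)+1-(m:ℤ)) * e ^ (m - (p+1))))) := by
      intro p hp
      rw [smul_mul_assoc]
      exact STEP1 Q hfact qbin hqbin k e f hke hkf hef m n p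
        (by simpa [Nat.lt_succ_iff] using Finset.mem_range.mp hp)
    rw [Finset.sum_congr rfl h1, Finset.sum_add_distrib]
    have h2 : (∑ p ∈ range (n+1), (qv Q ((p:ℤ)-(m:ℤ)) * ccoef Q qbin m n p) •
          (f ^ (n + 1 - p) * PP Q k (-(m:ℤ)-(n:ℤ)+2*(p:ℤ)-2) p * e ^ (m - p))) =
        (∑ p ∈ range (n+1+1), (qv Q ((p:ℤ)-(m:ℤ)) * ccoef Q qbin m n p) •
          (f ^ (n + 1 - p) * PP Q k (-(m:ℤ)-(n:ℤ)+2*(p:ℤ)-2) p * e ^ (m - p))) := by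
      rw [Finset.sum_range_succ _ (n+1),
        cc_eq_zero Q hfact qbin hqbin (m := m) (n := n) (p := n+1) (Or.inr (Nat.lt_succ_self n))]
      simp
    rw [h2, Finset.sum_range_succ' _ (n+1), Finset.sum_range_succ' _ (n+1)]
    rw [add_right_comm, ← Finset.sum_add_distrib]
    congr 1
    · apply Finset.sum_congr rfl
      intro p _
      exact (STEP2 Q hfact qbin hqbin k e f m n p).symm
    · simp only [PP_zero, Nat.sub_zero, Nat.cast_zero, pow_zero, mul_one]
      congr 1
      simp only [ccoef, qbin_zero Q qbin hqbin, qFact_zero, mul_one]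
      rw [qv_mul']
      congr 1
      push_cast
      ring

end mainsec

/-! ### glue -/

section glue
variable (V : Rˣ) (K : Aˣ) (E F : A)

lemma qv_one (Q : Rˣ) : qv Q 1 = (Q : R) := by rw [qv, zpow_one]

lemma qv_neg_one (Q : Rˣ) : qv Q (-1) = ((Q⁻¹ : Rˣ) : R) := by rw [qv, zpow_neg_one]

lemma qv_two (Q : Rˣ) : qv Q 2 = (Q : R) * (Q : R) := by
  rw [show (2:ℤ) = 1 + 1 by norm_num, ← qv_mul', qv_one]

lemma qv_neg_two (Q : Rˣ) : qv Q (-2) = ((Q⁻¹ : Rˣ) : R) * ((Q⁻¹ : Rˣ) : R) := by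
  rw [show (-2:ℤ) = -1 + -1 by norm_num, ← qv_mul', qv_neg_one]

lemma conj2 {x : A} {c : R} (h : (K:A) * x = c • (x * (K:A))) :
    ((K:A)*(K:A)) * x = (c*c) • (x * ((K:A)*(K:A))) := by
  calc ((K:A)*(K:A))*x = (K:A)*((K:A)*x) := by rw [mul_assoc]
    _ = (K:A)*(c•(x*(K:A))) := by rw [h]
    _ = c•(((K:A)*x)*(K:A)) := by rw [mul_smul_comm, mul_assoc]
    _ = c•((c•(x*(K:A)))*(K:A)) := by rw [h]
    _ = (c*c)•(x*((K:A)*(K:A))) := by rw [smul_mul_assoc, smul_smul, mul_assoc]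

lemma glue_hke (hKE : (K:A) * E = ((V^2 : Rˣ) : R) • (E * (K:A))) :
    ((K:A)*(K:A)) * ee V E = qv (V^2) 2 • (ee V E * ((K:A)*(K:A))) := by
  have h2 := conj2 (K := K) hKE
  rw [ee, mul_smul_comm, h2, smul_smul, smul_mul_assoc, smul_smul, qv_two]
  congr 1
  ring

lemma glue_hkf (hKF : (K:A) * F = (((V^2)⁻¹ : Rˣ) : R) • (F * (K:A))) :
    ((K:A)*(K:A)) * ff V K F = qv (V^2) (-2) • (ff V K F * ((K:A)*(K:A))) := by
  have h' : (K:A) * (F*(K:A)) = (((V^2)⁻¹ : Rˣ) : R) • ((F*(K:A))*(K:A)) := by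
    rw [← mul_assoc, hKF, smul_mul_assoc]
  have h2 := conj2 (K := K) h'
  rw [ff, mul_smul_comm, h2, smul_smul, smul_mul_assoc, smul_smul, qv_neg_two]
  congr 1
  ring

lemma glue_hef
    (hEF : ((V : R) - ((V⁻¹ : Rˣ) : R)) • (E * F - F * E) = (K : A) - ((K⁻¹ : Aˣ) : A))
    (hKE : (K:A) * E = ((V^2 : Rˣ) : R) • (E * (K:A))) :
    ee V E * ff V K F = qv (V^2) (-1) • (ff V K F * ee V E) +
      qI (V^2) 1 • DD (V^2) ((K:A)*(K:A)) 0 := by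
  have hvv : ((V^2 : Rˣ) : R) = (V : R) * (V : R) := by
    rw [Units.val_pow_eq_pow_val, sq]
  have hinv : ((V⁻¹ : Rˣ) : R) * (V : R) = 1 := by
    rw [← Units.val_mul, inv_mul_cancel, Units.val_one]
  have hqinv : (((V^2)⁻¹ : Rˣ) : R) * ((V^2 : Rˣ) : R) = 1 := by
    rw [← Units.val_mul, inv_mul_cancel, Units.val_one]
  have hKK : ((K⁻¹ : Aˣ) : A) * (K : A) = 1 := by
    rw [← Units.val_mul, inv_mul_cancel, Units.val_one]
  have hsw : ((V⁻¹ : Rˣ) : R) * (((V ^ 2 : Rˣ) : R) - 1) = (V : R) - ((V⁻¹ : Rˣ) : R) := by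
    rw [mul_sub, mul_one, hvv, ← mul_assoc, hinv, one_mul]
  have hlhs : ee V E * ff V K F =
      ((((V⁻¹:Rˣ):R) * (((V^2:Rˣ):R) - 1)) * (((V^2:Rˣ):R) - 1)) • ((E*F)*(K:A)) := by
    rw [ee, ff, smul_mul_assoc, mul_smul_comm, smul_smul, ← mul_assoc]
  have hfe : qv (V^2) (-1) • (ff V K F * ee V E) =
      ((((V⁻¹:Rˣ):R) * (((V^2:Rˣ):R) - 1)) * (((V^2:Rˣ):R) - 1)) • ((F*E)*(K:A)) := by
    rw [ff, ee, smul_mul_assoc, mul_smul_comm, smul_smul, smul_smul]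
    rw [mul_assoc F (K:A) E, hKE, mul_smul_comm, smul_smul]
    rw [← mul_assoc F E (K:A)]
    congr 1
    rw [qv_neg_one]
    linear_combination ((((V^2:Rˣ):R) - 1) * (((V⁻¹:Rˣ):R) * (((V^2:Rˣ):R) - 1))) * hqinv
  rw [hlhs, hfe, ← sub_eq_iff_eq_add', ← smul_sub, ← sub_mul]
  have hss : ((((V⁻¹:Rˣ):R) * (((V^2:Rˣ):R) - 1)) * (((V^2:Rˣ):R) - 1)) • ((E*F - F*E)*(K:A)) =
      (((V^2:Rˣ):R) - 1) •
        ((((V : R) - ((V⁻¹ : Rˣ) : R)) • (E*F - F*E)) * (K:A)) := by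
    rw [smul_mul_assoc, smul_smul, ← hsw]
    congr 1
    ring
  rw [hss, hEF, sub_mul, hKK]
  rw [qI_qv, qv_one, DD, qv_zero, one_smul]

end glue

/-! Statement 1: the commutation formula for e^m f^n in U_h(sl₂). -/

theorem stmt1
    (V : Rˣ) (hV : (V : R) = vexp) (K : Aˣ) (E F H : A)
    (hHE : H * E - E * H = 2 * E) (hHF : H * F - F * H = -(2 * F))
    (hEF : ((V : R) - ((V⁻¹ : Rˣ) : R)) • (E * F - F * E) = (K : A) - ((K⁻¹ : Aˣ) : A))
    (hKE : (K : A) * E = ((V ^ 2 : Rˣ) : R) • (E * (K : A)))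
    (hKF : (K : A) * F = (((V ^ 2)⁻¹ : Rˣ) : R) • (F * (K : A)))
    (hKH : (K : A) * H = H * (K : A))
    (qbin : ℤ → ℕ → R)
    (hqbin : ∀ (i : ℤ) (n : ℕ), qFact (V ^ 2) n * qbin i n = qPoch (V ^ 2) i n)
    (m n : ℕ) :
    (ee V E) ^ m * (ff V K F) ^ n =
      ∑ p ∈ range (min m n + 1),
        ((((V ^ 2) ^ (((p * (p + 1) / 2 : ℕ) : ℤ) - (n * m : ℤ)) : Rˣ) : R) *
            qFact (V ^ 2) p * qbin (m : ℤ) p * qbin (n : ℤ) p) •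
          ((ff V K F) ^ (n - p) *
            HPoch (V ^ 2) K (-(m : ℤ) - (n : ℤ) + 2 * (p : ℤ)) p * (ee V E) ^ (m - p)) := by
  have hfact := qFact_ne_zero V hV
  have hke := glue_hke V K E hKE
  have hkf := glue_hkf V K F hKF
  have hef := glue_hef V K E F hEF hKE
  rw [mainEq (V^2) hfact qbin hqbin ((K:A)*(K:A)) (ee V E) (ff V K F) hke hkf hef m n]
  have hconv : ∀ p : ℕ,
      ((((V ^ 2) ^ (((p * (p + 1) / 2 : ℕ) : ℤ) - (n * m : ℤ)) : Rˣ) : R) *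
          qFact (V ^ 2) p * qbin (m : ℤ) p * qbin (n : ℤ) p) •
        ((ff V K F) ^ (n - p) * HPoch (V ^ 2) K (-(m : ℤ) - (n : ℤ) + 2 * (p : ℤ)) p *
          (ee V E) ^ (m - p)) =
      ccoef (V^2) qbin m n p • ((ff V K F) ^ (n-p) *
        PP (V^2) ((K:A)*(K:A)) (-(m:ℤ)-(n:ℤ)+2*(p:ℤ)) p * (ee V E) ^ (m-p)) := by
    intro p
    rw [HPoch_eq]
    rfl
  rw [Finset.sum_congr rfl (fun p _ => hconv p)]
  refine (Finset.sum_subset ?_ ?_).symm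
  · intro x hx
    simp only [Finset.mem_range] at hx ⊢
    omega
  · intro p h1 h2
    simp only [Finset.mem_range] at h1 h2
    rw [cc_eq_zero (V^2) hfact qbin hqbin (Or.inl (by omega)), zero_smul]

end
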